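/- Fix a labeling of T_{3,∞} and ℓ ≥ 2. The subgroup Q̃_{ℓ,∞} has infinite index in Aut(T_{3,∞}). -/

import Mathlib

/-!
Nodes of the infinite rooted `d`-ary tree `T_{d,∞}` are identified with their
labels, i.e. finite words over `Fin d`; the node below `s₁…s_m` is `s₁…s_{m-1}`.
A tree automorphism is a permutation of the nodes preserving levels (word
length) and the descendant relation (list prefix).
-/

namespace Arboreal

/-- The map induced by `σ` on the labels of the `d^n` nodes lying `n` levels
above the node labeled `y` (junk value if the lengths do not work out, which
cannot happen for a tree automorphism). -/
noncomputable def localMap (d n : ℕ) (σ : Equiv.Perm (List (Fin d)))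
    (y : List (Fin d)) (w : List.Vector (Fin d) n) : List.Vector (Fin d) n :=
  if h : ((σ (y ++ w.toList)).drop y.length).length = n then
    ⟨(σ (y ++ w.toList)).drop y.length, h⟩ else w

/-- `sgn d n σ y`: the sign of the permutation of the set `{0,…,d-1}^n` of
labels induced by `σ` on the nodes `n` levels above `y` (by convention `1`
if this map fails to be a bijection). -/
noncomputable def sgn (d n : ℕ) (σ : Equiv.Perm (List (Fin d)))
    (y : List (Fin d)) : ℤˣ :=
  if h : Function.Bijective (localMap d n σ y) then
    Equiv.Perm.sign (Equiv.ofBijective _ h) else 1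

/-- A permutation of the set of nodes of `T_{d,∞}` is a tree automorphism iff
it preserves levels and the descendant (prefix) relation. -/
def IsTreeAut (d : ℕ) (σ : Equiv.Perm (List (Fin d))) : Prop :=
  (∀ w, (σ w).length = w.length) ∧
    ∀ w₁ w₂ : List (Fin d), w₁ <+: w₂ → σ w₁ <+: σ w₂

/-! ### auxiliary -/

def mh (f : Fin 3 → Fin 3) : List (Fin 3) → List (Fin 3)
  | [] => []
  | b :: t => f b :: t

@[simp] lemma mh_length (f : Fin 3 → Fin 3) (l : List (Fin 3)) :
    (mh f l).length = l.length := by cases l <;> simp [mh]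

lemma mh_mh (l : List (Fin 3)) :
    mh (Equiv.swap 1 2) (mh (Equiv.swap 1 2) l) = l := by
  cases l <;> simp [mh]

lemma mh_prefix (f : Fin 3 → Fin 3) {r₁ r₂ : List (Fin 3)} (h : r₁ <+: r₂) :
    mh f r₁ <+: mh f r₂ := by
  cases r₁ with
  | nil => simp [mh]
  | cons a t =>
    cases r₂ with
    | nil => exact absurd (List.eq_nil_of_prefix_nil h) (by simp)
    | cons b s =>
      rw [List.cons_prefix_cons] at h
      simp [mh, h.1, List.cons_prefix_cons, h.2]

lemma append_prefix_append {y a b : List (Fin 3)} (h : a <+: b) :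
    y ++ a <+: y ++ b := by
  obtain ⟨t, rfl⟩ := h
  exact ⟨t, by simp⟩

def Fy (y : List (Fin 3)) (w : List (Fin 3)) : List (Fin 3) :=
  if w.take y.length = y then y ++ mh (Equiv.swap 1 2) (w.drop y.length) else w

lemma len_le_of_take {y w : List (Fin 3)} (h : w.take y.length = y) :
    y.length ≤ w.length := by
  have := congrArg List.length h
  simp at this
  omega

lemma Fy_invol (y w : List (Fin 3)) : Fy y (Fy y w) = w := by
  by_cases h : w.take y.length = y
  · have h1 : Fy y w = y ++ mh (Equiv.swap 1 2) (w.drop y.length) := if_pos h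
    rw [h1, Fy, if_pos List.take_left, List.drop_left, mh_mh]
    conv_rhs => rw [← List.take_append_drop y.length w, h]
  · have h1 : Fy y w = w := if_neg h
    rw [h1]
    exact h1

def sws (y : List (Fin 3)) : Equiv.Perm (List (Fin 3)) :=
  ⟨Fy y, Fy y, Fy_invol y, Fy_invol y⟩

lemma sws_apply (y w : List (Fin 3)) : sws y w = Fy y w := rfl

lemma sws_inv (y : List (Fin 3)) : (sws y)⁻¹ = sws y := rfl

lemma Fy_length (y w : List (Fin 3)) : (Fy y w).length = w.length := by
  by_cases h : w.take y.length = y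
  · have := len_le_of_take h
    rw [Fy, if_pos h]
    simp
    omega
  · rw [Fy, if_neg h]

lemma Fy_prefix (y : List (Fin 3)) {w₁ w₂ : List (Fin 3)} (h : w₁ <+: w₂) :
    Fy y w₁ <+: Fy y w₂ := by
  by_cases h1 : w₁.take y.length = y
  · have hle : y.length ≤ w₁.length := len_le_of_take h1
    have h2 : w₂.take y.length = y := by
      obtain ⟨t, rfl⟩ := h
      rw [List.take_append_of_le_length hle, h1]
    rw [Fy, if_pos h1, Fy, if_pos h2]
    exact append_prefix_append (mh_prefix _ (h.drop _))
  · by_cases h2 : w₂.take y.length = y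
    · have hlt : w₁.length < y.length := by
        by_contra hc
        push_neg at hc
        obtain ⟨t, rfl⟩ := h
        rw [List.take_append_of_le_length hc] at h2
        exact h1 h2
      rw [Fy, if_neg h1, Fy, if_pos h2]
      refine List.IsPrefix.trans ?_ (List.prefix_append _ _)
      rw [← h2]
      have := h.take y.length
      rwa [List.take_of_length_le hlt.le] at this
    · rw [Fy, if_neg h1, Fy, if_neg h2]
      exact h

lemma sws_isTreeAut (y : List (Fin 3)) : IsTreeAut 3 (sws y) :=
  ⟨Fy_length y, fun _ _ h => Fy_prefix y h⟩

lemma mh_replicate (q : ℕ) :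
    mh (Equiv.swap 1 2) (List.replicate q (0 : Fin 3)) = List.replicate q 0 := by
  cases q with
  | zero => rfl
  | succ n =>
    simp [mh, List.replicate_succ]
    exact Equiv.swap_apply_of_ne_of_ne (by decide) (by decide)

lemma Fy_replicate (L m : ℕ) :
    Fy (List.replicate L (0 : Fin 3)) (List.replicate m 0) = List.replicate m 0 := by
  rw [Fy]
  by_cases h : (List.replicate m (0:Fin 3)).take (List.replicate L (0:Fin 3)).length
      = List.replicate L (0:Fin 3)
  · have hLm : L ≤ m := by simpa using len_le_of_take h
    rw [if_pos h]
    simp only [List.length_replicate, List.drop_replicate, mh_replicate]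
    rw [← List.replicate_add]
    congr 1
    omega
  · rw [if_neg h]



section TreeAutGroup

variable {d : ℕ} {σ τ : Equiv.Perm (List (Fin d))}

lemma isTreeAut_one : IsTreeAut d 1 := ⟨fun _ => rfl, fun _ _ h => h⟩

lemma IsTreeAut.mul (hσ : IsTreeAut d σ) (hτ : IsTreeAut d τ) :
    IsTreeAut d (σ * τ) := by
  refine ⟨fun w => ?_, fun a b h => ?_⟩
  · rw [Equiv.Perm.mul_apply, hσ.1, hτ.1]
  · rw [Equiv.Perm.mul_apply, Equiv.Perm.mul_apply]
    exact hσ.2 _ _ (hτ.2 _ _ h)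

lemma IsTreeAut.prefix_reflect (hσ : IsTreeAut d σ) {u v : List (Fin d)}
    (h : σ u <+: σ v) : u <+: v := by
  have hlen : u.length ≤ v.length := by
    have := h.length_le
    rwa [hσ.1, hσ.1] at this
  have h1 : σ (v.take u.length) <+: σ v := hσ.2 _ _ (List.take_prefix _ _)
  have hlen2 : (σ (v.take u.length)).length = (σ u).length := by
    rw [hσ.1, hσ.1, List.length_take]
    omega
  have h2 : σ (v.take u.length) = σ u := by
    rcases List.prefix_or_prefix_of_prefix h1 h with hc | hc
    · exact hc.eq_of_length hlen2
    · exact (hc.eq_of_length hlen2.symm).symm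
  have h3 : v.take u.length = u := σ.injective h2
  exact h3 ▸ List.take_prefix _ _

lemma IsTreeAut.inv (hσ : IsTreeAut d σ) : IsTreeAut d σ⁻¹ := by
  constructor
  · intro w
    have := hσ.1 (σ⁻¹ w)
    rw [(show ∀ x, σ (σ⁻¹ x) = x from fun x => σ.apply_symm_apply x)] at this
    exact this.symm
  · intro a b h
    apply hσ.prefix_reflect
    rwa [(show ∀ x, σ (σ⁻¹ x) = x from fun x => σ.apply_symm_apply x), (show ∀ x, σ (σ⁻¹ x) = x from fun x => σ.apply_symm_apply x)]

lemma IsTreeAut.nil (hσ : IsTreeAut d σ) : σ [] = [] :=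
  List.length_eq_zero_iff.mp ((hσ.1 []).trans List.length_nil)

/-- the automorphism group of `T_{d,∞}` as a subgroup of the permutations. -/
def Agrp (d : ℕ) : Subgroup (Equiv.Perm (List (Fin d))) where
  carrier := {σ | IsTreeAut d σ}
  one_mem' := isTreeAut_one
  mul_mem' ha hb := ha.mul hb
  inv_mem' ha := ha.inv

lemma IsTreeAut.decomp (hσ : IsTreeAut d σ) (y w : List (Fin d)) :
    σ (y ++ w) = σ y ++ (σ (y ++ w)).drop y.length := by
  have h : σ y <+: σ (y ++ w) := hσ.2 _ _ (List.prefix_append _ _)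
  conv_lhs => rw [← List.take_append_drop (σ y).length (σ (y ++ w)),
    ← List.prefix_iff_eq_take.mp h, hσ.1]

lemma localMap_toList (hσ : IsTreeAut d σ) (n : ℕ) (y : List (Fin d))
    (w : List.Vector (Fin d) n) :
    (localMap d n σ y w).toList = (σ (y ++ w.toList)).drop y.length := by
  have hlen : ((σ (y ++ w.toList)).drop y.length).length = n := by
    rw [List.length_drop, hσ.1, List.length_append, w.toList_length]
    omega
  have hdef : localMap d n σ y w = ⟨(σ (y ++ w.toList)).drop y.length, hlen⟩ := dif_pos hlen
  rw [hdef]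
  rfl

lemma localMap_mul (hσ : IsTreeAut d σ) (hτ : IsTreeAut d τ) (n : ℕ)
    (y : List (Fin d)) (w : List.Vector (Fin d) n) :
    localMap d n (σ * τ) y w = localMap d n σ (τ y) (localMap d n τ y w) := by
  apply List.Vector.toList_injective
  rw [localMap_toList (hσ.mul hτ), localMap_toList hσ, localMap_toList hτ,
    Equiv.Perm.mul_apply]
  rw [← hτ.decomp y w.toList, hτ.1]

lemma localMap_bijective (hσ : IsTreeAut d σ) (n : ℕ) (y : List (Fin d)) :
    Function.Bijective (localMap d n σ y) := by
  rw [Finite.injective_iff_bijective.symm]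
  intro w₁ w₂ hw
  have h1 : σ (y ++ w₁.toList) = σ (y ++ w₂.toList) := by
    rw [hσ.decomp y w₁.toList, hσ.decomp y w₂.toList,
      ← localMap_toList hσ n y w₁, ← localMap_toList hσ n y w₂, hw]
  have := σ.injective h1
  exact List.Vector.toList_injective (List.append_cancel_left this)

lemma sgn_mul (hσ : IsTreeAut d σ) (hτ : IsTreeAut d τ) (n : ℕ)
    (y : List (Fin d)) :
    sgn d n (σ * τ) y = sgn d n σ (τ y) * sgn d n τ y := by
  rw [sgn, sgn, sgn, dif_pos (localMap_bijective (hσ.mul hτ) n y),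
    dif_pos (localMap_bijective hσ n (τ y)), dif_pos (localMap_bijective hτ n y)]
  rw [show Equiv.ofBijective _ (localMap_bijective (hσ.mul hτ) n y) =
    Equiv.ofBijective _ (localMap_bijective hσ n (τ y)) *
      Equiv.ofBijective _ (localMap_bijective hτ n y) from
    Equiv.ext fun w => localMap_mul hσ hτ n y w]
  exact map_mul _ _ _

lemma sgn_one (n : ℕ) (y : List (Fin d)) : sgn d n 1 y = 1 := by
  have hid : localMap d n 1 y = id := by
    funext w
    apply List.Vector.toList_injective
    rw [localMap_toList isTreeAut_one]
    simp [List.drop_left]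
  rw [sgn]
  rw [hid]
  rw [dif_pos Function.bijective_id]
  rw [show Equiv.ofBijective _ Function.bijective_id = (1 : Equiv.Perm (List.Vector (Fin d) n)) from
    Equiv.ext fun w => rfl]
  exact map_one _

end TreeAutGroup

/-! ### the model permutations and their signs -/

def consE (n : ℕ) : Fin 3 × List.Vector (Fin 3) n ≃ List.Vector (Fin 3) (n + 1) where
  toFun p := p.1 ::ᵥ p.2
  invFun v := (v.head, v.tail)
  left_inv p := by simp
  right_inv v := by simp

def pV : ℕ → (n : ℕ) → Equiv.Perm (List.Vector (Fin 3) n)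
  | 0, 0 => 1
  | 0, n + 1 => (consE n).permCongr (Equiv.prodCongrLeft fun _ => Equiv.swap 1 2)
  | _ + 1, 0 => 1
  | p + 1, n + 1 => (consE n).permCongr (Equiv.Perm.prodExtendRight 0 (pV p n))

lemma sign_pV : ∀ p n, p < n → Equiv.Perm.sign (pV p n) = -1
  | 0, n + 1, _ => by
    rw [pV, Equiv.Perm.sign_permCongr, Equiv.Perm.sign_prodCongrLeft]
    rw [Finset.prod_const, Equiv.Perm.sign_swap (by decide), Finset.card_univ,
      card_vector]
    exact Odd.neg_one_pow (Odd.pow (by decide))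
  | p + 1, n + 1, h => by
    rw [pV, Equiv.Perm.sign_permCongr, Equiv.Perm.sign_prodExtendRight]
    exact sign_pV p n (by omega)

lemma toList_head_tail {n : ℕ} (v : List.Vector (Fin 3) (n + 1)) :
    v.toList = v.head :: v.tail.toList := by
  conv_lhs => rw [← v.cons_head_tail]
  rw [List.Vector.toList_cons]

lemma pV_toList : ∀ (p n : ℕ) (v : List.Vector (Fin 3) n),
    (pV p n v).toList =
      if v.toList.take p = List.replicate p 0
      then List.replicate p 0 ++ mh (Equiv.swap 1 2) (v.toList.drop p)
      else v.toList
  | 0, 0, v => by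
    have hv : v.toList = [] := List.length_eq_zero_iff.mp v.toList_length
    simp [pV, hv, mh]
  | 0, n + 1, v => by
    have happ : pV 0 (n + 1) v = (Equiv.swap 1 2 v.head) ::ᵥ v.tail := rfl
    rw [happ, List.Vector.toList_cons]
    rw [if_pos (by simp), toList_head_tail v]
    simp [mh]
  | p + 1, 0, v => by
    have hv : v.toList = [] := List.length_eq_zero_iff.mp v.toList_length
    rw [show pV (p + 1) 0 = 1 from rfl]
    rw [if_neg (by simp [hv, List.replicate_succ])]
    rfl
  | p + 1, n + 1, v => by
    have happ : pV (p + 1) (n + 1) v =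
        consE n (Equiv.Perm.prodExtendRight 0 (pV p n) (v.head, v.tail)) := rfl
    rw [toList_head_tail v, List.take_succ_cons, List.drop_succ_cons,
      List.replicate_succ]
    by_cases hh : v.head = 0
    · rw [happ, hh, Equiv.Perm.prodExtendRight_apply_eq]
      have : consE n ((0 : Fin 3), pV p n v.tail) = (0 : Fin 3) ::ᵥ pV p n v.tail := rfl
      rw [this, List.Vector.toList_cons, pV_toList p n v.tail]
      by_cases hc : v.tail.toList.take p = List.replicate p 0
      · simp [hc]
      · simp [hc]
    · rw [happ, Equiv.Perm.prodExtendRight_apply_ne _ hh]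
      have : consE n (v.head, v.tail) = v.head ::ᵥ v.tail := rfl
      rw [this, v.cons_head_tail, toList_head_tail v,
        if_neg (by simp [hh])]

/-! ### local data of the generators -/

lemma localMap_sws_pV {L m n : ℕ} (hm : m ≤ L) (hL : L < m + n) :
    localMap 3 n (sws (List.replicate L 0)) (List.replicate m 0)
      = ⇑(pV (L - m) n) := by
  have hLm : L = m + (L - m) := by omega
  set p := L - m with hp
  funext w
  apply List.Vector.toList_injective
  rw [localMap_toList (sws_isTreeAut _), sws_apply, Fy, pV_toList]
  simp only [List.length_replicate]
  have hrep : List.replicate L (0 : Fin 3)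
      = List.replicate m 0 ++ List.replicate p 0 := by
    rw [← List.replicate_add, ← hLm]
  have htake : (List.replicate m (0 : Fin 3) ++ w.toList).take L
      = List.replicate m 0 ++ w.toList.take p := by
    rw [hLm, List.take_append, List.take_of_length_le (by simp [hLm]),
      List.length_replicate]
    congr 2
    omega
  have hdrop : (List.replicate m (0 : Fin 3) ++ w.toList).drop L
      = w.toList.drop p := by
    rw [hLm, List.drop_append, List.drop_eq_nil_of_le (by simp [hLm]),
      List.length_replicate, List.nil_append]
    congr 1
    omega
  by_cases hc : w.toList.take p = List.replicate p 0
  · rw [if_pos (by rw [htake, hc, ← hrep]), if_pos hc, hdrop, hrep,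
      List.append_assoc, List.drop_left' List.length_replicate]
  · rw [if_neg (by rw [htake, hrep]; exact fun hx => hc (List.append_cancel_left hx)), if_neg hc,
      List.drop_left' List.length_replicate]

lemma localMap_sws_id {L m n : ℕ} (h : L < m ∨ m + n ≤ L) :
    localMap 3 n (sws (List.replicate L 0)) (List.replicate m 0) = id := by
  funext w
  apply List.Vector.toList_injective
  rw [localMap_toList (sws_isTreeAut _), sws_apply, Fy]
  simp only [List.length_replicate]
  have hlen : (List.replicate m (0:Fin 3) ++ w.toList).length = m + n := by simp
  rcases h with h | h
  · -- L < m
    have htake : (List.replicate m (0:Fin 3) ++ w.toList).take L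
        = List.replicate L 0 := by
      rw [List.take_append_of_le_length (by simp; omega), List.take_replicate]
      congr 1
      omega
    have hdrop : (List.replicate m (0:Fin 3) ++ w.toList).drop L
        = List.replicate (m - L) 0 ++ w.toList := by
      rw [List.drop_append, List.drop_replicate, List.length_replicate,
        show L - m = 0 by omega, List.drop_zero]
    rw [if_pos htake, hdrop]
    have hmh : mh (Equiv.swap 1 2) (List.replicate (m - L) (0:Fin 3) ++ w.toList)
        = List.replicate (m - L) 0 ++ w.toList := by
      have h1 : m - L = (m - L - 1) + 1 := by omega
      rw [h1, List.replicate_succ, List.cons_append]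
      show Equiv.swap 1 2 0 :: _ = _
      rw [Equiv.swap_apply_of_ne_of_ne (by decide) (by decide)]
    rw [hmh, ← List.append_assoc, ← List.replicate_add, show L + (m - L) = m by omega,
      List.drop_left' List.length_replicate]
    rfl
  · -- m + n ≤ L
    have htakeall : (List.replicate m (0:Fin 3) ++ w.toList).take L
        = List.replicate m 0 ++ w.toList :=
      List.take_of_length_le (by rw [hlen]; omega)
    by_cases hc : List.replicate m (0:Fin 3) ++ w.toList = List.replicate L 0
    · have hnil : (List.replicate m (0:Fin 3) ++ w.toList).drop L = [] :=
        List.drop_eq_nil_of_le (by rw [hlen]; omega)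
      rw [if_pos (by rw [htakeall]; exact hc), hnil,
        show mh (Equiv.swap 1 2) ([] : List (Fin 3)) = [] from rfl,
        List.append_nil, ← hc, List.drop_left' List.length_replicate]
      rfl
    · rw [if_neg (by rw [htakeall]; exact hc),
        List.drop_left' List.length_replicate]
      rfl

/-! ### sign values of the generators -/

lemma sgn_eq_one_of_id {d n : ℕ} {σ : Equiv.Perm (List (Fin d))} {y : List (Fin d)}
    (h : localMap d n σ y = id) : sgn d n σ y = 1 := by
  rw [sgn, h, dif_pos Function.bijective_id,
    show Equiv.ofBijective _ Function.bijective_id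
      = (1 : Equiv.Perm (List.Vector (Fin d) n)) from Equiv.ext fun w => rfl]
  exact map_one _

lemma sgn_eq_neg_one {n p : ℕ} {σ : Equiv.Perm (List (Fin 3))} {y : List (Fin 3)}
    (hp : p < n) (h : localMap 3 n σ y = ⇑(pV p n)) : sgn 3 n σ y = -1 := by
  rw [sgn, h, dif_pos (pV p n).bijective,
    show Equiv.ofBijective _ (pV p n).bijective = pV p n from Equiv.ext fun w => rfl]
  exact sign_pV p n hp

lemma sgn_sws_replicate (L m n : ℕ) :
    sgn 3 n (sws (List.replicate L 0)) (List.replicate m 0)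
      = if m ≤ L ∧ L < m + n then -1 else 1 := by
  by_cases h : m ≤ L ∧ L < m + n
  · rw [if_pos h]
    exact sgn_eq_neg_one (show L - m < n by omega) (localMap_sws_pV h.1 h.2)
  · rw [if_neg h]
    exact sgn_eq_one_of_id (localMap_sws_id (by omega))

/-! ### the subgroup Q̃ -/

def Htil (ℓ : ℕ) : Subgroup (Equiv.Perm (List (Fin 3))) where
  carrier := {σ | IsTreeAut 3 σ ∧ ∀ y : List (Fin 3),
    sgn 3 ℓ σ y * sgn 3 (ℓ - 1) σ y = sgn 3 ℓ σ [] * sgn 3 (ℓ - 1) σ []}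
  one_mem' := ⟨isTreeAut_one, fun y => by rw [sgn_one, sgn_one, sgn_one, sgn_one]⟩
  mul_mem' := by
    rintro a b ⟨ha1, ha2⟩ ⟨hb1, hb2⟩
    refine ⟨ha1.mul hb1, fun y => ?_⟩
    have key : ∀ z : List (Fin 3),
        sgn 3 ℓ (a * b) z * sgn 3 (ℓ - 1) (a * b) z
          = (sgn 3 ℓ a [] * sgn 3 (ℓ - 1) a [])
            * (sgn 3 ℓ b z * sgn 3 (ℓ - 1) b z) := by
      intro z
      rw [sgn_mul ha1 hb1, sgn_mul ha1 hb1, mul_mul_mul_comm, ha2 (b z)]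
    rw [key y, key [], hb2 y]
  inv_mem' := by
    rintro a ⟨ha1, ha2⟩
    refine ⟨ha1.inv, fun y => ?_⟩
    have h1 : ∀ (n : ℕ) (z : List (Fin 3)),
        sgn 3 n a (a⁻¹ z) * sgn 3 n a⁻¹ z = 1 := by
      intro n z
      rw [← sgn_mul ha1 ha1.inv, mul_inv_cancel, sgn_one]
    have h2 : ∀ z : List (Fin 3), sgn 3 ℓ a⁻¹ z * sgn 3 (ℓ - 1) a⁻¹ z
        = (sgn 3 ℓ a [] * sgn 3 (ℓ - 1) a [])⁻¹ := by
      intro z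
      have hmul : (sgn 3 ℓ a (a⁻¹ z) * sgn 3 (ℓ - 1) a (a⁻¹ z))
          * (sgn 3 ℓ a⁻¹ z * sgn 3 (ℓ - 1) a⁻¹ z) = 1 := by
        rw [mul_mul_mul_comm, h1 ℓ z, h1 (ℓ - 1) z, one_mul]
      rw [ha2 (a⁻¹ z)] at hmul
      exact (inv_eq_of_mul_eq_one_right hmul).symm
    rw [h2 y, h2 []]

/-! ### the generators of infinitely many cosets -/

lemma g_gen (hℓ : 2 ≤ ℓ) (i m : ℕ) :
    sgn 3 ℓ (sws (List.replicate (ℓ + i) 0)) (List.replicate m 0)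
      * sgn 3 (ℓ - 1) (sws (List.replicate (ℓ + i) 0)) (List.replicate m 0)
      = if m = i + 1 then -1 else 1 := by
  rw [sgn_sws_replicate, sgn_sws_replicate]
  by_cases h1 : m ≤ ℓ + i ∧ ℓ + i < m + ℓ
  · by_cases h2 : m ≤ ℓ + i ∧ ℓ + i < m + (ℓ - 1)
    · rw [if_pos h1, if_pos h2, if_neg (by omega)]
      decide
    · rw [if_pos h1, if_neg h2, if_pos (by omega)]
      decide
  · rw [if_neg h1, if_neg (by omega), if_neg (by omega)]
    decide

theorem Qtilde_infinite_index' (ℓ : ℕ) (hℓ : 2 ≤ ℓ) :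
    (Htil ℓ).relIndex (Agrp 3) = 0 := by
  have hgen : ∀ i : ℕ, sws (List.replicate (ℓ + i) 0) ∈ Agrp 3 :=
    fun i => sws_isTreeAut _
  have : Infinite ((Agrp 3 : Subgroup _) ⧸ ((Htil ℓ).subgroupOf (Agrp 3))) := by
    apply Infinite.of_injective
      (fun i : ℕ => QuotientGroup.mk (⟨sws (List.replicate (ℓ + i) 0), hgen i⟩ :
        (Agrp 3 : Subgroup _)))
    intro i j hij
    by_contra hne
    rw [QuotientGroup.eq, Subgroup.mem_subgroupOf] at hij
    have hcoe : ((((⟨sws (List.replicate (ℓ + i) 0), hgen i⟩ :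
          (Agrp 3 : Subgroup _)))⁻¹
        * ⟨sws (List.replicate (ℓ + j) 0), hgen j⟩ :
          (Agrp 3 : Subgroup _)) : Equiv.Perm (List (Fin 3)))
        = sws (List.replicate (ℓ + i) 0) * sws (List.replicate (ℓ + j) 0) := by
      rw [Subgroup.coe_mul, Subgroup.coe_inv]
      rw [show ((⟨sws (List.replicate (ℓ + i) 0), hgen i⟩ :
        (Agrp 3 : Subgroup _)) : Equiv.Perm (List (Fin 3)))⁻¹
          = (sws (List.replicate (ℓ + i) 0))⁻¹ from rfl, sws_inv]
    rw [hcoe] at hij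
    obtain ⟨haut, hconst⟩ := hij
    have hy := hconst (List.replicate (i + 1) 0)
    have hfixj : ∀ m : ℕ, sws (List.replicate (ℓ + j) 0) (List.replicate m 0)
        = List.replicate m 0 := fun m => Fy_replicate _ _
    have hfixnil : sws (List.replicate (ℓ + j) 0) ([] : List (Fin 3)) = [] := by
      have := hfixj 0
      simpa using this
    have hi := sws_isTreeAut (List.replicate (ℓ + i) (0 : Fin 3))
    have hj := sws_isTreeAut (List.replicate (ℓ + j) (0 : Fin 3))
    have e1 : ∀ m : ℕ, sgn 3 ℓ (sws (List.replicate (ℓ + i) 0)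
          * sws (List.replicate (ℓ + j) 0)) (List.replicate m 0)
        * sgn 3 (ℓ - 1) (sws (List.replicate (ℓ + i) 0)
          * sws (List.replicate (ℓ + j) 0)) (List.replicate m 0)
        = (if m = i + 1 then -1 else 1) * (if m = j + 1 then -1 else 1) := by
      intro m
      rw [sgn_mul hi hj, sgn_mul hi hj, hfixj m, mul_mul_mul_comm,
        g_gen hℓ i m, g_gen hℓ j m]
    have e2 := e1 (i + 1)
    have e3 : sgn 3 ℓ (sws (List.replicate (ℓ + i) 0)
          * sws (List.replicate (ℓ + j) 0)) []
        * sgn 3 (ℓ - 1) (sws (List.replicate (ℓ + i) 0)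
          * sws (List.replicate (ℓ + j) 0)) [] = 1 := by
      have := e1 0
      rw [show List.replicate 0 (0 : Fin 3) = [] from rfl] at this
      rw [this, if_neg (by omega), if_neg (by omega), one_mul]
    rw [hy, e3] at e2
    rw [if_pos rfl, if_neg (by omega), mul_one] at e2
    exact absurd e2 (by decide)
  rw [Subgroup.relIndex, Subgroup.index]
  exact Nat.card_eq_zero_of_infinite

/-- for a fixed labeling of `T_{3,∞}` and `ℓ ≥ 2`, the
subgroup `Q̃_{ℓ,∞}` has infinite index (relative index `0` in Mathlib's
convention) in the full automorphism group `Aut(T_{3,∞})`. -/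
theorem Qtilde_infinite_index (ℓ : ℕ) (hℓ : 2 ≤ ℓ) :
    ∃ A Htil : Subgroup (Equiv.Perm (List (Fin 3))),
      (A : Set (Equiv.Perm (List (Fin 3)))) = {σ | IsTreeAut 3 σ} ∧
      (Htil : Set (Equiv.Perm (List (Fin 3)))) =
        {σ | IsTreeAut 3 σ ∧ ∀ y : List (Fin 3),
          sgn 3 ℓ σ y * sgn 3 (ℓ - 1) σ y =
            sgn 3 ℓ σ [] * sgn 3 (ℓ - 1) σ []} ∧
      Htil.relIndex A = 0 := by
  exact ⟨Agrp 3, Htil ℓ, rfl, rfl, Qtilde_infinite_index' ℓ hℓ⟩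

end Arboreal
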